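/- The measure μ is quasi-invariant under the action of F_r on B, with Radon–Nikodym derivative given by the Poisson kernel: for every γ ∈ F_r, the pushforward measure γ_*μ (defined by γ_*μ(A) = μ(γ⁻¹·A) for Borel A ⊆ B) is absolutely continuous with respect to μ, with density d(γ_*μ)/dμ (ξ) = P(γ,ξ) = (2r-1)^{2(γ|ξ) − |γ|} for μ-almost every ξ ∈ B. -/

import Mathlib

/-!
Setting: the free group `F_r = ⟨a₁,…,a_r⟩` (`r ≥ 2`), its boundary `B` of infinite
reduced words, the visual measure `μ` on `B`, the Gromov product, the Poisson kernel
`P(γ,ξ) = (2r-1)^(2(γ|ξ)-|γ|)` and the Harish-Chandra function `Ξ`.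
-/

open MeasureTheory Filter Topology ComplexConjugate
open scoped ENNReal

namespace ArxivFree

/-- The alphabet `S = {a₁^{±1},…,a_r^{±1}}` of generators and their inverses:
a letter is a generator together with a sign. -/
abbrev Letter (r : ℕ) := Fin r × Bool

/-- The inverse of a letter. -/
def bar {r : ℕ} (x : Letter r) : Letter r := (x.1, !x.2)

/-- The boundary `B`: infinite reduced words over the alphabet, i.e. sequences of
letters in which no letter is immediately followed by its inverse. -/
abbrev Boundary (r : ℕ) := {ξ : ℕ → Letter r // ∀ i, ξ (i + 1) ≠ bar (ξ i)}

/-- `l` is a (finite) prefix of the infinite word `ξ`. -/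
def IsPrefixSeq {r : ℕ} (l : List (Letter r)) (ξ : ℕ → Letter r) : Prop :=
  ∀ i, i < l.length → l[i]? = some (ξ i)

/-- The cylinder `B_u`: infinite reduced words admitting the reduced word of `u`
as a prefix. -/
def cylinder {r : ℕ} (u : FreeGroup (Fin r)) : Set (Boundary r) :=
  {ξ | IsPrefixSeq (FreeGroup.toWord u) ξ.1}

/-- The Gromov product: the length of the longest common prefix of the finite word `l`
and the infinite word `ξ`. -/
def gromov {r : ℕ} (l : List (Letter r)) (ξ : ℕ → Letter r) : ℕ :=
  Nat.findGreatest (fun k => ∀ i, i < k → l[i]? = some (ξ i)) l.length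

/-- The Poisson kernel `P(γ,ξ) = (2r-1)^(2(γ|ξ) - |γ|)`. -/
noncomputable def PK {r : ℕ} (γ : FreeGroup (Fin r)) (ξ : Boundary r) : ℝ :=
  (2 * (r : ℝ) - 1) ^
    (2 * (gromov (FreeGroup.toWord γ) ξ.1 : ℤ) - ((FreeGroup.toWord γ).length : ℤ))

/-- The sphere `S_n ⊆ F_r` of elements of word length `n`, as a finite set. -/
noncomputable def sphere (r n : ℕ) : Finset (FreeGroup (Fin r)) :=
  (Set.Finite.preimage (Function.Injective.injOn FreeGroup.toWord_injective)
    (List.finite_length_eq (Letter r) n)).toFinset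

/-- The Harish-Chandra function `Ξ(γ) = ∫_B P(γ,ξ)^{1/2} dμ(ξ)`. -/
noncomputable def HC {r : ℕ} (μ : Measure (Boundary r)) (γ : FreeGroup (Fin r)) : ℝ :=
  ∫ ξ, Real.sqrt (PK γ ξ) ∂μ

lemma bar_bar {r : ℕ} (x : Letter r) : bar (bar x) = x := by
  simp [bar]

lemma reduced_getElem {r : ℕ} {l : List (Letter r)} (hl : FreeGroup.reduce l = l)
    {n : ℕ} (h : n + 1 < l.length) : l[n + 1]'h ≠ bar (l[n]'(by omega)) := by
  intro hEq
  have hdecomp : l = l.take n ++ (l[n]'(by omega)) :: (l[n+1]'h) :: l.drop (n + 2) := by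
    conv_lhs => rw [← List.take_append_drop n l]
    congr 1
    rw [List.drop_eq_getElem_cons (by omega : n < l.length),
      List.drop_eq_getElem_cons h]
  rw [hEq] at hdecomp
  exact FreeGroup.reduce.not (x := (l[n]'(by omega)).1) (b := (l[n]'(by omega)).2)
    (L₂ := l.take n) (L₃ := l.drop (n+2)) (by rw [hl]; exact hdecomp)

def cancelLen {r : ℕ} (l : List (Letter r)) (ξ : ℕ → Letter r) : ℕ :=
  Nat.findGreatest (fun k => ∀ i, i < k → l.reverse[i]? = some (bar (ξ i))) l.length

def concatSeq {r : ℕ} (l : List (Letter r)) (ξ : ℕ → Letter r) : ℕ → Letter r := fun n =>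
  if h : n < l.length - cancelLen l ξ then l[n]'(by omega)
  else ξ (n - (l.length - cancelLen l ξ) + cancelLen l ξ)

lemma concatSeq_reduced {r : ℕ} (l : List (Letter r)) (ξ : ℕ → Letter r)
    (hl : FreeGroup.reduce l = l) (hξ : ∀ i, ξ (i + 1) ≠ bar (ξ i)) :
    ∀ n, concatSeq l ξ (n + 1) ≠ bar (concatSeq l ξ n) := by
  intro n
  have hmL : cancelLen l ξ ≤ l.length := Nat.findGreatest_le _
  unfold concatSeq
  by_cases h1 : n + 1 < l.length - cancelLen l ξ
  · have h0 : n < l.length - cancelLen l ξ := by omega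
    rw [dif_pos h1, dif_pos h0]
    exact reduced_getElem hl (by omega)
  · by_cases h0 : n < l.length - cancelLen l ξ
    · -- junction case
      rw [dif_neg h1, dif_pos h0]
      set m := cancelLen l ξ with hmdef
      have hfg : Nat.findGreatest
          (fun k => ∀ i, i < k → l.reverse[i]? = some (bar (ξ i))) l.length = m := rfl
      have hmlt : m < l.length := by omega
      have hidx : n + 1 - (l.length - m) + m = m := by omega
      rw [hidx]
      have hnot : ¬ (∀ i, i < m + 1 → l.reverse[i]? = some (bar (ξ i))) :=
        Nat.findGreatest_is_greatest (k := m + 1) (by rw [hfg]; omega) (by omega)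
      have hQ : ∀ i, i < m → l.reverse[i]? = some (bar (ξ i)) := by
        rcases Nat.eq_zero_or_pos m with hz | hpos
        · intro i hi; omega
        · exact Nat.findGreatest_of_ne_zero hfg (by omega)
      have hrev : l.reverse[m]? ≠ some (bar (ξ m)) := by
        intro hcon
        apply hnot
        intro i hi
        rcases Nat.lt_succ_iff_lt_or_eq.mp hi with h | rfl
        · exact hQ i h
        · exact hcon
      intro hEq
      apply hrev
      have hidx2 : l.length - 1 - m = n := by omega
      rw [List.getElem?_reverse hmlt, List.getElem?_eq_getElem (by omega)]
      rw [hEq, bar_bar]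
      simp only [hidx2]
    · rw [dif_neg h1, dif_neg h0]
      have hidx : n + 1 - (l.length - cancelLen l ξ) + cancelLen l ξ =
          (n - (l.length - cancelLen l ξ) + cancelLen l ξ) + 1 := by omega
      rw [hidx]
      exact hξ _

/-- The action of the free group on its boundary. -/
def act {r : ℕ} (γ : FreeGroup (Fin r)) (ξ : Boundary r) : Boundary r :=
  ⟨concatSeq (FreeGroup.toWord γ) ξ.1,
    concatSeq_reduced _ _ (FreeGroup.reduce_toWord γ) ξ.2⟩


/-! ### Auxiliary development for the quasi-invariance theorem -/

section Aux

variable {r : ℕ}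

lemma bar_ne (x : Letter r) : bar x ≠ x := by
  simp [bar, Prod.ext_iff]

/-! #### `Nat.findGreatest` utilities specialized to `gromov` and `cancelLen` -/

lemma gromov_le (l : List (Letter r)) (ξ : ℕ → Letter r) : gromov l ξ ≤ l.length :=
  Nat.findGreatest_le _

lemma gromov_spec (l : List (Letter r)) (ξ : ℕ → Letter r) :
    ∀ i, i < gromov l ξ → l[i]? = some (ξ i) :=
  Nat.findGreatest_spec (P := fun k => ∀ i, i < k → l[i]? = some (ξ i))
    (Nat.zero_le l.length) (fun i hi => absurd hi (Nat.not_lt_zero i))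

lemma gromov_eq (l : List (Letter r)) (ξ : ℕ → Letter r) {m : ℕ} (hm : m ≤ l.length)
    (h1 : ∀ i, i < m → l[i]? = some (ξ i))
    (h2 : m = l.length ∨ l[m]? ≠ some (ξ m)) : gromov l ξ = m := by
  unfold gromov
  rw [Nat.findGreatest_eq_iff]
  refine ⟨hm, fun _ => h1, fun n hn hn' hP => ?_⟩
  rcases h2 with rfl | h2
  · omega
  · exact h2 (hP m hn)

lemma gromov_lt_spec {l : List (Letter r)} {ξ : ℕ → Letter r} (h : gromov l ξ < l.length) :
    l[gromov l ξ]? ≠ some (ξ (gromov l ξ)) := by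
  intro hc
  have hg := Nat.findGreatest_is_greatest
    (P := fun k => ∀ i, i < k → l[i]? = some (ξ i)) (n := l.length)
    (k := gromov l ξ + 1) (Nat.lt_succ_self _) (by omega)
  apply hg
  intro i hi
  rcases Nat.lt_succ_iff_lt_or_eq.mp hi with h' | rfl
  · exact gromov_spec l ξ i h'
  · exact hc

lemma cancelLen_le (l : List (Letter r)) (ξ : ℕ → Letter r) : cancelLen l ξ ≤ l.length :=
  Nat.findGreatest_le _

lemma cancelLen_spec (l : List (Letter r)) (ξ : ℕ → Letter r) :
    ∀ i, i < cancelLen l ξ → l.reverse[i]? = some (bar (ξ i)) :=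
  Nat.findGreatest_spec (P := fun k => ∀ i, i < k → l.reverse[i]? = some (bar (ξ i)))
    (Nat.zero_le l.length) (fun i hi => absurd hi (Nat.not_lt_zero i))

lemma cancelLen_eq (l : List (Letter r)) (ξ : ℕ → Letter r) {m : ℕ} (hm : m ≤ l.length)
    (h1 : ∀ i, i < m → l.reverse[i]? = some (bar (ξ i)))
    (h2 : m = l.length ∨ l.reverse[m]? ≠ some (bar (ξ m))) : cancelLen l ξ = m := by
  unfold cancelLen
  rw [Nat.findGreatest_eq_iff]
  refine ⟨hm, fun _ => h1, fun n hn hn' hP => ?_⟩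
  rcases h2 with rfl | h2
  · omega
  · exact h2 (hP m hn)

lemma cancelLen_lt_spec {l : List (Letter r)} {ξ : ℕ → Letter r} (h : cancelLen l ξ < l.length) :
    l.reverse[cancelLen l ξ]? ≠ some (bar (ξ (cancelLen l ξ))) := by
  intro hc
  have hg := Nat.findGreatest_is_greatest
    (P := fun k => ∀ i, i < k → l.reverse[i]? = some (bar (ξ i))) (n := l.length)
    (k := cancelLen l ξ + 1) (Nat.lt_succ_self _) (by omega)
  apply hg
  intro i hi
  rcases Nat.lt_succ_iff_lt_or_eq.mp hi with h' | rfl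
  · exact cancelLen_spec l ξ i h'
  · exact hc

/-! #### congruence lemmas (finite windows) -/

lemma findGreatest_congr {P Q : ℕ → Prop} [DecidablePred P] [DecidablePred Q] (n : ℕ)
    (h : ∀ k, k ≤ n → (P k ↔ Q k)) : Nat.findGreatest P n = Nat.findGreatest Q n := by
  induction n with
  | zero => rfl
  | succ n ih =>
    rw [Nat.findGreatest_succ, Nat.findGreatest_succ]
    by_cases hp : P (n + 1)
    · rw [if_pos hp, if_pos ((h _ le_rfl).mp hp)]
    · rw [if_neg hp, if_neg (fun hq => hp ((h _ le_rfl).mpr hq)),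
        ih (fun k hk => h k (le_trans hk (Nat.le_succ n)))]

lemma cancelLen_congr {l : List (Letter r)} {ξ η : ℕ → Letter r}
    (h : ∀ i, i < l.length → ξ i = η i) : cancelLen l ξ = cancelLen l η := by
  unfold cancelLen
  apply findGreatest_congr
  intro k hk
  constructor
  · intro hp i hi
    rw [← h i (by omega)]; exact hp i hi
  · intro hp i hi
    rw [h i (by omega)]; exact hp i hi

lemma gromov_congr {l : List (Letter r)} {ξ η : ℕ → Letter r}
    (h : ∀ i, i < l.length → ξ i = η i) : gromov l ξ = gromov l η := by
  unfold gromov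
  apply findGreatest_congr
  intro k hk
  constructor
  · intro hp i hi
    rw [← h i (by omega)]; exact hp i hi
  · intro hp i hi
    rw [h i (by omega)]; exact hp i hi

lemma concatSeq_congr {l : List (Letter r)} {ξ η : ℕ → Letter r} (n : ℕ)
    (h : ∀ i, i ≤ l.length + n → ξ i = η i) : concatSeq l ξ n = concatSeq l η n := by
  have hc : cancelLen l ξ = cancelLen l η := cancelLen_congr (fun i hi => h i (by omega))
  unfold concatSeq
  by_cases h1 : n < l.length - cancelLen l ξ
  · rw [dif_pos h1, dif_pos (by omega : n < l.length - cancelLen l η)]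
  · rw [dif_neg h1, dif_neg (by omega : ¬ n < l.length - cancelLen l η)]
    rw [h _ (by have := cancelLen_le l ξ; omega)]
    congr 1
    omega

/-! #### basic `concatSeq` computations -/

lemma concatSeq_nil (ξ : ℕ → Letter r) : concatSeq [] ξ = ξ := by
  funext n
  have h0 : cancelLen ([] : List (Letter r)) ξ = 0 :=
    Nat.le_zero.mp (cancelLen_le _ _)
  simp [concatSeq, h0]

lemma cancelLen_single (x : Letter r) (ξ : ℕ → Letter r) :
    cancelLen [x] ξ = if ξ 0 = bar x then 1 else 0 := by
  split_ifs with h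
  · apply cancelLen_eq _ _ (by simp)
    · intro i hi
      have hi0 : i = 0 := by omega
      subst hi0
      simp [h, bar_bar]
    · left; simp
  · apply cancelLen_eq _ _ (by simp)
    · intro i hi; omega
    · right
      rw [List.reverse_singleton]
      intro hc
      simp only [List.getElem?_cons_zero, Option.some.injEq] at hc
      exact h (by rw [hc, bar_bar])

lemma concatSeq_single_cancel {x : Letter r} {ξ : ℕ → Letter r} (h : ξ 0 = bar x) :
    concatSeq [x] ξ = fun n => ξ (n + 1) := by
  funext n
  have hc : cancelLen [x] ξ = 1 := by rw [cancelLen_single, if_pos h]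
  simp [concatSeq, hc]

lemma concatSeq_single_nocancel {x : Letter r} {ξ : ℕ → Letter r} (h : ξ 0 ≠ bar x) :
    concatSeq [x] ξ = fun n => if n = 0 then x else ξ (n - 1) := by
  funext n
  have hc : cancelLen [x] ξ = 0 := by rw [cancelLen_single, if_neg h]
  simp only [concatSeq, hc, List.length_singleton, Nat.sub_zero, Nat.add_zero]
  by_cases hn : n = 0
  · subst hn; simp
  · rw [dif_neg (by omega), if_neg hn]

/-! #### reducedness lemmas -/

lemma reduce_eq_self_of {l : List (Letter r)}
    (h : ∀ n (hn : n + 1 < l.length), l[n + 1] ≠ bar (l[n]'(by omega))) :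
    FreeGroup.reduce l = l := by
  induction l with
  | nil => rfl
  | cons x t ih =>
    have ht : FreeGroup.reduce t = t := by
      apply ih
      intro n hn
      have := h (n + 1) (by simpa using Nat.succ_lt_succ hn)
      simpa using this
    rw [FreeGroup.reduce.cons, ht]
    cases t with
    | nil => rfl
    | cons y s =>
      have hy : y ≠ bar x := by
        have := h 0 (by simp)
        simpa using this
      show (if x.1 = y.1 ∧ x.2 = !y.2 then s else x :: y :: s) = x :: y :: s
      rw [if_neg]
      rintro ⟨h1, h2⟩
      apply hy
      have : y = (x.1, !x.2) := by
        apply Prod.ext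
        · exact h1.symm
        · rw [h2, Bool.not_not]
      rw [this]; rfl

lemma tail_reduced {x : Letter r} {t : List (Letter r)}
    (h : FreeGroup.reduce (x :: t) = x :: t) : FreeGroup.reduce t = t := by
  apply reduce_eq_self_of
  intro n hn
  have := reduced_getElem h (n := n + 1) (by simpa using Nat.succ_lt_succ hn)
  simpa using this

/-! #### single letters as group elements -/

/-- The group element given by a single letter. -/
def elt (x : Letter r) : FreeGroup (Fin r) := FreeGroup.mk [x]

lemma toWord_elt (x : Letter r) : (elt x).toWord = [x] := by
  rw [elt, FreeGroup.toWord_mk, FreeGroup.reduce_singleton]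

lemma elt_ne_one (x : Letter r) : elt x ≠ 1 := by
  intro h
  have h2 := toWord_elt x
  rw [h, FreeGroup.toWord_one] at h2
  simp at h2

lemma inv_elt (x : Letter r) : (elt x)⁻¹ = elt (bar x) := by
  rw [elt, FreeGroup.inv_mk]
  rfl

lemma toWord_elt_mul (y : Letter r) (u : FreeGroup (Fin r))
    (h : u.toWord[0]? ≠ some (bar y)) :
    (elt y * u).toWord = y :: u.toWord := by
  conv_lhs => rw [← FreeGroup.mk_toWord (x := u)]
  rw [elt, FreeGroup.mul_mk, FreeGroup.toWord_mk]
  show FreeGroup.reduce (y :: u.toWord) = _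
  apply reduce_eq_self_of
  intro n hn
  match n, hn with
  | 0, hn =>
    simp only [List.getElem_cons_succ, List.getElem_cons_zero]
    intro hc
    apply h
    rw [List.getElem?_eq_getElem (by simpa using hn), hc]
  | (m + 1), hn =>
    simp only [List.getElem_cons_succ]
    exact reduced_getElem (FreeGroup.reduce_toWord u) (by simpa using hn)

lemma toWord_inv_elt_mul {x : Letter r} {u : FreeGroup (Fin r)} {w' : List (Letter r)}
    (h : u.toWord = x :: w') : ((elt x)⁻¹ * u).toWord = w' := by
  rw [inv_elt]
  conv_lhs => rw [← FreeGroup.mk_toWord (x := u)]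
  rw [h, elt, FreeGroup.mul_mk, FreeGroup.toWord_mk]
  show FreeGroup.reduce (bar x :: x :: w') = w'
  have hw : FreeGroup.reduce (x :: w') = x :: w' := by
    rw [← h]; exact FreeGroup.reduce_toWord u
  rw [FreeGroup.reduce.cons, hw]
  show (if (bar x).1 = x.1 ∧ (bar x).2 = !x.2 then w' else _) = w'
  rw [if_pos ⟨rfl, rfl⟩]

/-! #### the key concatenation lemma -/

lemma concatSeq_cons {x : Letter r} {t : List (Letter r)} {ξ : ℕ → Letter r}
    (hred : FreeGroup.reduce (x :: t) = x :: t) (hξ : ∀ i, ξ (i + 1) ≠ bar (ξ i)) :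
    concatSeq (x :: t) ξ = concatSeq [x] (concatSeq t ξ) := by
  have hmle : cancelLen t ξ ≤ t.length := cancelLen_le t ξ
  set m := cancelLen t ξ with hm
  rcases lt_or_eq_of_le hmle with hlt | heq
  · -- the whole of `t` does not cancel
    have hcxt : cancelLen (x :: t) ξ = m := by
      apply cancelLen_eq _ _ (by simp only [List.length_cons]; omega)
      · intro i hi
        rw [List.reverse_cons, List.getElem?_append_left (by simpa using (by omega : i < t.length))]
        exact cancelLen_spec t ξ i hi
      · right
        rw [List.reverse_cons, List.getElem?_append_left (by simpa using hlt)]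
        exact cancelLen_lt_spec (by rw [← hm]; exact hlt)
    have ht0 : 0 < t.length := by omega
    have hη0 : concatSeq t ξ 0 = t[0]'ht0 := by
      simp only [concatSeq, ← hm]
      rw [dif_pos (by omega)]
    have hne : concatSeq t ξ 0 ≠ bar x := by
      rw [hη0]
      have := reduced_getElem hred (n := 0) (by simp only [List.length_cons]; omega)
      simpa using this
    rw [concatSeq_single_nocancel hne]
    funext n
    simp only [concatSeq, hcxt, ← hm, List.length_cons]
    by_cases hn : n = 0
    · subst hn
      rw [dif_pos (by omega), if_pos rfl]
      simp
    · rw [if_neg hn]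
      obtain ⟨j, rfl⟩ : ∃ j, n = j + 1 := ⟨n - 1, by omega⟩
      simp only [Nat.add_sub_cancel]
      by_cases hj : j < t.length - m
      · rw [dif_pos (by omega), dif_pos hj]
        simp
      · rw [dif_neg (by omega), dif_neg hj]
        congr 1
        omega
  · -- the whole of `t` cancels
    have hηdef : concatSeq t ξ = fun n => ξ (n + m) := by
      funext n
      simp only [concatSeq, ← hm]
      rw [dif_neg (by omega)]
      congr 1
      omega
    by_cases hbx : ξ m = bar x
    · -- the letter `x` cancels as well
      have hc : cancelLen (x :: t) ξ = m + 1 := by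
        apply cancelLen_eq _ _ (by simp only [List.length_cons]; omega)
        · intro i hi
          rcases Nat.lt_succ_iff_lt_or_eq.mp hi with h' | rfl
          · rw [List.reverse_cons,
              List.getElem?_append_left (by simp only [List.length_reverse]; omega)]
            exact cancelLen_spec t ξ i h'
          · have hil : m = t.reverse.length := by rw [List.length_reverse]; omega
            rw [List.reverse_cons, hil, List.getElem?_concat_length, ← hil, hbx, bar_bar]
        · left; simp only [List.length_cons]; omega
      rw [hηdef, concatSeq_single_cancel (show (fun n => ξ (n + m)) 0 = bar x from by
        simpa using hbx)]
      funext n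
      simp only [concatSeq, hc, List.length_cons]
      rw [dif_neg (by omega)]
      congr 1
      omega
    · -- the letter `x` does not cancel
      have hc : cancelLen (x :: t) ξ = m := by
        apply cancelLen_eq _ _ (by simp only [List.length_cons]; omega)
        · intro i hi
          rw [List.reverse_cons,
            List.getElem?_append_left (by simp only [List.length_reverse]; omega)]
          exact cancelLen_spec t ξ i hi
        · right
          have hil : m = t.reverse.length := by rw [List.length_reverse]; omega
          rw [List.reverse_cons, hil, List.getElem?_concat_length, ← hil]
          intro hcon
          simp only [Option.some.injEq] at hcon
          exact hbx (by rw [hcon, bar_bar])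
      rw [hηdef, concatSeq_single_nocancel (show (fun n => ξ (n + m)) 0 ≠ bar x from by
        simpa using hbx)]
      funext n
      simp only [concatSeq, hc, List.length_cons]
      by_cases hn : n = 0
      · subst hn
        rw [dif_pos (by omega), if_pos rfl]
        simp
      · rw [dif_neg (by omega), if_neg hn]
        congr 1
        omega

/-! #### the action: basic properties -/

lemma act_val (γ : FreeGroup (Fin r)) (ξ : Boundary r) :
    (act γ ξ).1 = concatSeq γ.toWord ξ.1 := rfl

lemma act_elt_val (x : Letter r) (ξ : Boundary r) :
    (act (elt x) ξ).1 = concatSeq [x] ξ.1 := by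
  rw [act_val, toWord_elt]

lemma act_cons {γ : FreeGroup (Fin r)} {x : Letter r} {w' : List (Letter r)}
    (h : γ.toWord = x :: w') (ξ : Boundary r) :
    act γ ξ = act (elt x) (act ((elt x)⁻¹ * γ) ξ) := by
  apply Subtype.ext
  rw [act_val, act_val, act_val, toWord_elt, toWord_inv_elt_mul h, h]
  exact concatSeq_cons (by rw [← h]; exact FreeGroup.reduce_toWord γ) ξ.2

lemma act_elt_inv (x : Letter r) (ξ : Boundary r) :
    act (elt (bar x)) (act (elt x) ξ) = ξ := by
  apply Subtype.ext
  rw [act_val, act_val, toWord_elt, toWord_elt]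
  by_cases h : ξ.1 0 = bar x
  · rw [concatSeq_single_cancel h]
    have h2 : (fun n => ξ.1 (n + 1)) 0 ≠ bar (bar x) := by
      simp only [bar_bar, Nat.zero_add]
      intro hc
      exact ξ.2 0 (by rw [hc, h, bar_bar])
    rw [concatSeq_single_nocancel h2]
    funext n
    by_cases hn : n = 0
    · subst hn; simp [h]
    · simp only [if_neg hn]
      have hnn : n - 1 + 1 = n := by omega
      rw [hnn]
  · rw [concatSeq_single_nocancel h]
    have h2 : (fun n => if n = 0 then x else ξ.1 (n - 1)) 0 = bar (bar x) := by
      simp [bar_bar]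
    rw [concatSeq_single_cancel h2]
    funext n
    simp

/-! #### prefix lemmas -/

lemma isPrefixSeq_nil (ξ : ℕ → Letter r) : IsPrefixSeq [] ξ := fun i hi => by simp at hi

lemma isPrefixSeq_cons {y : Letter r} {w : List (Letter r)} {ξ : ℕ → Letter r} :
    IsPrefixSeq (y :: w) ξ ↔ ξ 0 = y ∧ IsPrefixSeq w (fun n => ξ (n + 1)) := by
  constructor
  · intro h
    constructor
    · have := h 0 (by simp)
      simp only [List.getElem?_cons_zero, Option.some.injEq] at this
      exact this.symm
    · intro i hi
      have := h (i + 1) (by simp only [List.length_cons]; omega)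
      simpa using this
  · rintro ⟨h0, h⟩ i hi
    cases i with
    | zero => simp [h0]
    | succ j =>
      have := h j (by simp only [List.length_cons] at hi; omega)
      simpa using this

lemma isPrefixSeq_singleton {y : Letter r} {ξ : ℕ → Letter r} :
    IsPrefixSeq [y] ξ ↔ ξ 0 = y := by
  rw [isPrefixSeq_cons]
  simp [isPrefixSeq_nil]

lemma mem_cylinder_elt {y : Letter r} {ξ : Boundary r} :
    ξ ∈ cylinder (elt y) ↔ ξ.1 0 = y := by
  change IsPrefixSeq (elt y).toWord ξ.1 ↔ _
  rw [toWord_elt, isPrefixSeq_singleton]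

/-! #### gromov product computations -/

lemma gromov_nil (ξ : ℕ → Letter r) : gromov [] ξ = 0 := rfl

lemma gromov_cons_ne {x : Letter r} {w' : List (Letter r)} {ξ : ℕ → Letter r}
    (h : ξ 0 ≠ x) : gromov (x :: w') ξ = 0 := by
  apply gromov_eq _ _ (Nat.zero_le _) (fun i hi => absurd hi (by omega))
  right
  intro hc
  rw [List.getElem?_cons_zero] at hc
  exact h (Option.some.inj hc).symm

lemma gromov_cons_eq {x : Letter r} {w' : List (Letter r)} {ξ : ℕ → Letter r}
    (h : ξ 0 = x) : gromov (x :: w') ξ = gromov w' (fun n => ξ (n + 1)) + 1 := by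
  set g' := gromov w' (fun n => ξ (n + 1)) with hg'
  have hle : g' ≤ w'.length := gromov_le _ _
  apply gromov_eq
  · simp only [List.length_cons]; omega
  · intro i hi
    cases i with
    | zero => simp [h]
    | succ j =>
      have := gromov_spec w' (fun n => ξ (n + 1)) j (by omega)
      simpa using this
  · rcases eq_or_lt_of_le hle with heq | hlt
    · left; simp only [List.length_cons]; omega
    · right
      have hmm := gromov_lt_spec hlt
      intro hc
      apply hmm
      simpa using hc

lemma gromov_single (x : Letter r) (ξ : ℕ → Letter r) :
    gromov [x] ξ = if ξ 0 = x then 1 else 0 := by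
  split_ifs with h
  · rw [gromov_cons_eq h, gromov_nil]
  · exact gromov_cons_ne h

/-! #### Poisson kernel computations -/

lemma PK_elt (x : Letter r) (ξ : Boundary r) :
    PK (elt x) ξ = if ξ.1 0 = x then 2 * (r : ℝ) - 1 else (2 * (r : ℝ) - 1)⁻¹ := by
  rw [PK, toWord_elt, gromov_single]
  split_ifs with h
  · norm_num
  · norm_num [zpow_neg]

lemma PK_pos (hr : 2 ≤ r) (γ : FreeGroup (Fin r)) (ξ : Boundary r) : 0 < PK γ ξ := by
  have h2 : (2 : ℝ) ≤ (r : ℝ) := by exact_mod_cast hr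
  exact zpow_pos (by linarith) _

lemma PK_cocycle (hr : 2 ≤ r) {γ : FreeGroup (Fin r)} {x : Letter r} {w' : List (Letter r)}
    (hw : γ.toWord = x :: w') (ξ : Boundary r) :
    PK γ ξ = PK (elt x) ξ * PK ((elt x)⁻¹ * γ) (act (elt (bar x)) ξ) := by
  have h2 : (2 : ℝ) ≤ (r : ℝ) := by exact_mod_cast hr
  have hb : (2 * (r : ℝ) - 1) ≠ 0 := by linarith
  rw [PK, PK, PK, toWord_elt, toWord_inv_elt_mul hw, hw, ← zpow_add₀ hb]
  congr 1
  have hval : (act (elt (bar x)) ξ).1 = concatSeq [bar x] ξ.1 := act_elt_val _ _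
  by_cases h : ξ.1 0 = x
  · have hshift : (act (elt (bar x)) ξ).1 = fun n => ξ.1 (n + 1) := by
      rw [hval, concatSeq_single_cancel (by rw [bar_bar]; exact h)]
    rw [hshift, gromov_cons_eq h, gromov_single, if_pos h]
    simp only [List.length_cons, List.length_singleton, List.length_nil]
    push_cast
    ring
  · have hη : (act (elt (bar x)) ξ).1 = fun n => if n = 0 then bar x else ξ.1 (n - 1) := by
      rw [hval, concatSeq_single_nocancel (by rw [bar_bar]; exact h)]
    have hg' : gromov w' (act (elt (bar x)) ξ).1 = 0 := by
      cases w' with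
      | nil => exact gromov_nil _
      | cons y s =>
        apply gromov_cons_ne
        rw [hη]
        simp only [if_pos rfl]
        have hred : FreeGroup.reduce (x :: y :: s) = x :: y :: s := by
          rw [← hw]; exact FreeGroup.reduce_toWord γ
        have := reduced_getElem hred (n := 0) (by simp)
        simp only [List.getElem_cons_succ, List.getElem_cons_zero] at this
        exact fun hc => this (by rw [← hc]; simp)
    rw [gromov_cons_ne h, gromov_single, if_neg h, hg']
    simp only [List.length_cons, List.length_singleton, List.length_nil]
    push_cast
    ring

/-! #### measurability -/

lemma measurable_window {β : Type*} [MeasurableSpace β] (hr : 0 < r) (k : ℕ)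
    (G : (ℕ → Letter r) → β)
    (hG : ∀ ξ η : ℕ → Letter r, (∀ i, i < k → ξ i = η i) → G ξ = G η) :
    Measurable fun ξ : Boundary r => G ξ.1 := by
  haveI : Inhabited (Letter r) := ⟨(⟨0, hr⟩, true)⟩
  have hfac : (fun ξ : Boundary r => G ξ.1) =
      (fun v : Fin k → Letter r =>
        G (fun i => if h : i < k then v ⟨i, h⟩ else default)) ∘
      (fun ξ : Boundary r => fun i : Fin k => ξ.1 i) := by
    funext ξ
    apply hG
    intro i hi
    simp [hi]
  rw [hfac]
  exact (measurable_of_countable _).comp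
    (measurable_pi_lambda _ fun i => (measurable_pi_apply (i : ℕ)).comp measurable_subtype_coe)

lemma measurable_act (hr : 0 < r) (γ : FreeGroup (Fin r)) : Measurable (act γ) := by
  apply Measurable.subtype_mk
  apply measurable_pi_lambda
  intro n
  exact measurable_window hr (γ.toWord.length + n + 1) (fun ξ => concatSeq γ.toWord ξ n)
    (fun ξ η h => concatSeq_congr n (fun i hi => h i (by omega)))

lemma measurable_PK (hr : 0 < r) (γ : FreeGroup (Fin r)) :
    Measurable fun ξ : Boundary r => ENNReal.ofReal (PK γ ξ) := by
  have hfac : (fun ξ : Boundary r => ENNReal.ofReal (PK γ ξ)) =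
      (fun m : ℕ => ENNReal.ofReal
        ((2 * (r : ℝ) - 1) ^ (2 * (m : ℤ) - (γ.toWord.length : ℤ)))) ∘
      (fun ξ : Boundary r => gromov γ.toWord ξ.1) := rfl
  rw [hfac]
  exact (measurable_of_countable _).comp
    (measurable_window hr γ.toWord.length (fun ξ => gromov γ.toWord ξ)
      (fun ξ η h => gromov_congr h))

lemma measurableSet_prefixSet (w : List (Letter r)) :
    MeasurableSet {ξ : Boundary r | IsPrefixSeq w ξ.1} := by
  have heq : {ξ : Boundary r | IsPrefixSeq w ξ.1} =
      ⋂ i : Fin w.length,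
        (fun ξ : Boundary r => ξ.1 (i : ℕ)) ⁻¹' {a | w[(i : ℕ)]? = some a} := by
    ext ξ
    simp only [Set.mem_setOf_eq, Set.mem_iInter, Set.mem_preimage]
    exact ⟨fun h i => h i i.isLt, fun h i hi => h ⟨i, hi⟩⟩
  rw [heq]
  exact MeasurableSet.iInter fun i =>
    ((measurable_pi_apply ((i : ℕ))).comp measurable_subtype_coe)
      ((Set.to_countable _).measurableSet)

lemma measurableSet_cylinder (u : FreeGroup (Fin r)) : MeasurableSet (cylinder u) :=
  measurableSet_prefixSet _

/-! #### the cylinder π-system generates the σ-algebra -/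

/-- The collection of cylinders on nontrivial group elements. -/
def Cyl (r : ℕ) : Set (Set (Boundary r)) :=
  {A | ∃ u : FreeGroup (Fin r), u ≠ 1 ∧ A = cylinder u}

lemma isPiSystem_Cyl : IsPiSystem (Cyl r) := by
  rintro A ⟨u, hu, rfl⟩ B ⟨v, hv, rfl⟩ hne
  obtain ⟨ξ, hξu, hξv⟩ := hne
  have hξu : IsPrefixSeq u.toWord ξ.1 := hξu
  have hξv : IsPrefixSeq v.toWord ξ.1 := hξv
  rcases le_total u.toWord.length v.toWord.length with h | h
  · have hsub : cylinder v ⊆ cylinder u := by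
      intro η hη
      have hη : IsPrefixSeq v.toWord η.1 := hη
      intro i hi
      rw [hξu i hi, ← hξv i (by omega), hη i (by omega)]
    rw [Set.inter_eq_self_of_subset_right hsub]
    exact ⟨v, hv, rfl⟩
  · have hsub : cylinder u ⊆ cylinder v := by
      intro η hη
      have hη : IsPrefixSeq u.toWord η.1 := hη
      intro i hi
      rw [hξv i hi, ← hξu i (by omega), hη i (by omega)]
    rw [Set.inter_eq_self_of_subset_left hsub]
    exact ⟨u, hu, rfl⟩

lemma prefix_word_reduced (ξ : Boundary r) (k : ℕ) :
    FreeGroup.reduce (List.ofFn fun j : Fin k => ξ.1 j) = List.ofFn fun j : Fin k => ξ.1 j := by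
  apply reduce_eq_self_of
  intro n hn
  simp only [List.length_ofFn] at hn
  rw [List.getElem_ofFn, List.getElem_ofFn]
  simpa using ξ.2 n

lemma measurable_pi_of_coords {α : Type*} [m : MeasurableSpace α] (v : α → ℕ → Letter r)
    (h : ∀ (i : ℕ) (a : Letter r), MeasurableSet {x : α | v x i = a}) : Measurable v := by
  rw [measurable_pi_iff]
  intro i
  apply measurable_to_countable'
  intro a
  exact h i a

lemma measurableSet_coord_gen (i : ℕ) (a : Letter r) :
    MeasurableSet[MeasurableSpace.generateFrom (Cyl r)] {ξ : Boundary r | ξ.1 i = a} := by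
  haveI : Countable (FreeGroup (Fin r)) :=
    Function.Injective.countable FreeGroup.toWord_injective
  have hset : {ξ : Boundary r | ξ.1 i = a} =
      ⋃ (u : FreeGroup (Fin r)) (_ : u ≠ 1 ∧ u.toWord[i]? = some a), cylinder u := by
    ext ξ
    simp only [Set.mem_setOf_eq, Set.mem_iUnion]
    constructor
    · intro h
      set w := List.ofFn fun j : Fin (i + 1) => ξ.1 j with hwdef
      have hwred := prefix_word_reduced ξ (i + 1)
      have htw : (FreeGroup.mk w).toWord = w := by
        rw [FreeGroup.toWord_mk]; exact hwred
      have hlen : w.length = i + 1 := by simp [hwdef]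
      refine ⟨FreeGroup.mk w, ⟨?_, ?_⟩, ?_⟩
      · intro hcon
        rw [hcon, FreeGroup.toWord_one] at htw
        rw [← htw] at hlen
        simp at hlen
      · rw [htw, List.getElem?_eq_getElem (by omega)]
        simp only [Option.some.injEq, hwdef]
        rw [List.getElem_ofFn]
        simpa using h
      · show IsPrefixSeq (FreeGroup.mk w).toWord ξ.1
        rw [htw]
        intro j hj
        rw [List.getElem?_eq_getElem hj]
        simp only [Option.some.injEq, hwdef]
        rw [List.getElem_ofFn]
    · rintro ⟨u, ⟨hu1, hu2⟩, hmem⟩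
      have hmem : IsPrefixSeq u.toWord ξ.1 := hmem
      have hi : i < u.toWord.length := by
        by_contra hcon
        rw [List.getElem?_eq_none (by omega)] at hu2
        simp at hu2
      have := hmem i hi
      rw [hu2] at this
      exact (Option.some.inj this).symm
  rw [hset]
  exact MeasurableSet.iUnion fun u => MeasurableSet.iUnion fun hu =>
    MeasurableSpace.measurableSet_generateFrom ⟨u, hu.1, rfl⟩

lemma generateFrom_Cyl (hr : 0 < r) :
    (inferInstance : MeasurableSpace (Boundary r)) = MeasurableSpace.generateFrom (Cyl r) := by
  apply le_antisymm
  · -- the subtype σ-algebra is generated by cylinders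
    have hval : @Measurable (Boundary r) (ℕ → Letter r)
        (MeasurableSpace.generateFrom (Cyl r)) _ Subtype.val :=
      @measurable_pi_of_coords r (Boundary r) (MeasurableSpace.generateFrom (Cyl r))
        Subtype.val (fun i a => measurableSet_coord_gen i a)
    intro s hs
    obtain ⟨t, ht, rfl⟩ := hs
    exact hval ht
  · apply MeasurableSpace.generateFrom_le
    rintro A ⟨u, hu, rfl⟩
    exact measurableSet_cylinder u

/-! #### transport of densities -/

lemma map_withDensity {T Tinv : Boundary r → Boundary r} (hT : Measurable T)
    (hTinv : Measurable Tinv) (hinv : ∀ ξ, Tinv (T ξ) = ξ)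
    {f : Boundary r → ℝ≥0∞} (hf : Measurable f) (μ : Measure (Boundary r)) :
    (μ.withDensity f).map T = (μ.map T).withDensity (f ∘ Tinv) := by
  ext A hA
  rw [Measure.map_apply hT hA, withDensity_apply _ (hT hA), withDensity_apply _ hA,
    setLIntegral_map hA (hf.comp hTinv) hT]
  refine setLIntegral_congr_fun (hT hA) (fun ξ _ => ?_)
  simp [hinv ξ]

/-! #### preimages of cylinders under the generator action -/

lemma gen_preimage_a {x : Letter r} {u : FreeGroup (Fin r)} {w' : List (Letter r)}
    (hu : u.toWord = x :: w') (hw' : w' ≠ []) :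
    act (elt x) ⁻¹' cylinder u = cylinder ((elt x)⁻¹ * u) := by
  have hw : FreeGroup.reduce (x :: w') = x :: w' := by
    rw [← hu]; exact FreeGroup.reduce_toWord u
  have hw0 : w'[0]'(List.length_pos_iff.mpr hw') ≠ bar x := by
    have := reduced_getElem hw (n := 0) (by simp [List.length_pos_iff.mpr hw'])
    simpa using this
  ext ξ
  simp only [Set.mem_preimage]
  change IsPrefixSeq u.toWord (act (elt x) ξ).1 ↔ IsPrefixSeq ((elt x)⁻¹ * u).toWord ξ.1
  rw [toWord_inv_elt_mul hu, hu, act_elt_val]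
  by_cases h : ξ.1 0 = bar x
  · rw [concatSeq_single_cancel h]
    constructor
    · intro hp
      exfalso
      rw [isPrefixSeq_cons] at hp
      exact ξ.2 0 (by rw [hp.1, h, bar_bar])
    · intro hp
      exfalso
      have h0 := hp 0 (List.length_pos_iff.mpr hw')
      rw [List.getElem?_eq_getElem (List.length_pos_iff.mpr hw')] at h0
      exact hw0 ((Option.some.inj h0).trans h)
  · rw [concatSeq_single_nocancel h, isPrefixSeq_cons]
    have hsh : (fun n => if n + 1 = 0 then x else ξ.1 (n + 1 - 1)) = ξ.1 := by
      funext n; simp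
    constructor
    · intro hp
      have := hp.2
      simpa [hsh] using this
    · intro hp
      refine ⟨by simp, ?_⟩
      simpa [hsh] using hp

lemma gen_preimage_b {x : Letter r} {u : FreeGroup (Fin r)} (hu : u.toWord = [x]) :
    act (elt x) ⁻¹' cylinder u = (cylinder (elt (bar x)))ᶜ := by
  ext ξ
  simp only [Set.mem_preimage, Set.mem_compl_iff, mem_cylinder_elt]
  change IsPrefixSeq u.toWord (act (elt x) ξ).1 ↔ _
  rw [hu, act_elt_val, isPrefixSeq_singleton]
  by_cases h : ξ.1 0 = bar x
  · rw [concatSeq_single_cancel h]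
    constructor
    · intro hp
      have hp' : ξ.1 1 = x := hp
      exact absurd (by rw [hp', h, bar_bar] : ξ.1 1 = bar (ξ.1 0)) (ξ.2 0)
    · intro hp
      exact absurd h hp
  · rw [concatSeq_single_nocancel h]
    simpa using h

lemma gen_preimage_c {x : Letter r} {u : FreeGroup (Fin r)} (hu : u ≠ 1)
    (hx : u.toWord[0]? ≠ some x) :
    act (elt x) ⁻¹' cylinder u = cylinder (elt (bar x) * u) := by
  have hw0 : u.toWord[0]? ≠ some (bar (bar x)) := by rwa [bar_bar]
  have htW : (elt (bar x) * u).toWord = bar x :: u.toWord := toWord_elt_mul _ _ hw0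
  have hwne : u.toWord ≠ [] :=
    fun hcon => hu (FreeGroup.toWord_injective (by rw [hcon, FreeGroup.toWord_one]))
  have hlpos : 0 < u.toWord.length := List.length_pos_iff.mpr hwne
  ext ξ
  simp only [Set.mem_preimage]
  change IsPrefixSeq u.toWord (act (elt x) ξ).1 ↔ IsPrefixSeq (elt (bar x) * u).toWord ξ.1
  rw [htW, act_elt_val, isPrefixSeq_cons]
  by_cases h : ξ.1 0 = bar x
  · rw [concatSeq_single_cancel h]
    simp only [h, true_and]
  · rw [concatSeq_single_nocancel h]
    constructor
    · intro hp
      exfalso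
      apply hx
      have h0 := hp 0 hlpos
      rw [h0]
      simp
    · intro hp
      exact absurd hp.1 h

/-! #### the measure identity for a single generator -/

lemma gen_map_eq (hr : 2 ≤ r) (μ : Measure (Boundary r)) [IsProbabilityMeasure μ]
    (hμ : ∀ u : FreeGroup (Fin r), u ≠ 1 →
      μ (cylinder u) =
        1 / (2 * (r : ℝ≥0∞) * (2 * (r : ℝ≥0∞) - 1) ^ ((FreeGroup.toWord u).length - 1)))
    (x : Letter r) :
    μ.map (act (elt x)) = μ.withDensity (fun ξ => ENNReal.ofReal (PK (elt x) ξ)) := by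
  have hr0 : 0 < r := by omega
  set c : ℝ≥0∞ := 2 * (r : ℝ≥0∞) - 1 with hc
  have h2le : (2 : ℝ≥0∞) ≤ (r : ℝ≥0∞) := by exact_mod_cast hr
  have h4 : (4 : ℝ≥0∞) ≤ 2 * (r : ℝ≥0∞) := by
    calc (4 : ℝ≥0∞) = 2 * 2 := by norm_num
    _ ≤ 2 * (r : ℝ≥0∞) := mul_le_mul_right h2le 2
  have h2rtop : (2 * (r : ℝ≥0∞)) ≠ ∞ :=
    ENNReal.mul_ne_top (by norm_num) (ENNReal.natCast_ne_top r)
  have h2r0 : (2 * (r : ℝ≥0∞)) ≠ 0 := by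
    intro h
    rw [h] at h4
    exact absurd h4 (by norm_num)
  have hc0 : c ≠ 0 := by
    intro h
    rw [hc, tsub_eq_zero_iff_le] at h
    have := le_trans h4 h
    norm_num at this
  have hctop : c ≠ ∞ := by
    rw [hc]
    exact ne_top_of_le_ne_top h2rtop tsub_le_self
  have hc1 : c + 1 = 2 * (r : ℝ≥0∞) := by
    rw [hc]
    exact tsub_add_cancel_of_le (le_trans (by norm_num) h4)
  have hpos : (0 : ℝ) < 2 * (r : ℝ) - 1 := by
    have : (2 : ℝ) ≤ (r : ℝ) := by exact_mod_cast hr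
    linarith
  have hofc : ENNReal.ofReal (2 * (r : ℝ) - 1) = c := by
    have h1 : (2 * (r : ℝ)) = ((2 * r : ℕ) : ℝ) := by push_cast; ring
    rw [ENNReal.ofReal_sub _ (by norm_num), ENNReal.ofReal_one, h1,
      ENNReal.ofReal_natCast, hc]
    congr 1
    push_cast
    ring
  have hofcinv : ENNReal.ofReal ((2 * (r : ℝ) - 1)⁻¹) = c⁻¹ := by
    rw [ENNReal.ofReal_inv_of_pos hpos, hofc]
  have hfval : ∀ ξ : Boundary r,
      ENNReal.ofReal (PK (elt x) ξ) = if ξ.1 0 = x then c else c⁻¹ := by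
    intro ξ
    rw [PK_elt]
    split_ifs
    exacts [hofc, hofcinv]
  have harith : ∀ k : ℕ,
      c * (1 / (2 * (r : ℝ≥0∞) * c ^ (k + 1))) = 1 / (2 * (r : ℝ≥0∞) * c ^ k) := by
    intro k
    rw [one_div, one_div, pow_succ, ← mul_assoc,
      ENNReal.mul_inv (Or.inl (mul_ne_zero h2r0 (pow_ne_zero k hc0))) (Or.inr hc0),
      mul_comm c ((2 * (r : ℝ≥0∞) * c ^ k)⁻¹ * c⁻¹), mul_assoc,
      ENNReal.inv_mul_cancel hc0 hctop, mul_one]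
  have harith' : ∀ k : ℕ,
      c⁻¹ * (1 / (2 * (r : ℝ≥0∞) * c ^ k)) = 1 / (2 * (r : ℝ≥0∞) * c ^ (k + 1)) := by
    intro k
    rw [← harith k, ← mul_assoc, ENNReal.inv_mul_cancel hc0 hctop, one_mul]
  -- agreement on cylinders
  have key : ∀ u : FreeGroup (Fin r), u ≠ 1 →
      μ.map (act (elt x)) (cylinder u) =
      μ.withDensity (fun ξ => ENNReal.ofReal (PK (elt x) ξ)) (cylinder u) := by
    intro u hu
    have hwne : u.toWord ≠ [] :=
      fun hcon => hu (FreeGroup.toWord_injective (by rw [hcon, FreeGroup.toWord_one]))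
    have hlpos : 0 < u.toWord.length := List.length_pos_iff.mpr hwne
    rw [Measure.map_apply (measurable_act hr0 (elt x)) (measurableSet_cylinder u),
      withDensity_apply _ (measurableSet_cylinder u)]
    by_cases hx0 : u.toWord[0]? = some x
    · obtain ⟨w', hw⟩ : ∃ w', u.toWord = x :: w' := by
        cases hcw : u.toWord with
        | nil => exact absurd hcw hwne
        | cons y t =>
          rw [hcw] at hx0
          simp only [List.getElem?_cons_zero, Option.some.injEq] at hx0
          exact ⟨t, by rw [hx0]⟩
      have hRHS : ∫⁻ ξ in cylinder u, ENNReal.ofReal (PK (elt x) ξ) ∂μ =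
          c * μ (cylinder u) := by
        have hconst : ∀ ξ ∈ cylinder u, ENNReal.ofReal (PK (elt x) ξ) = c := by
          intro ξ hξ
          have hpre : IsPrefixSeq u.toWord ξ.1 := hξ
          rw [hfval]
          have h0 := hpre 0 hlpos
          rw [hw] at h0
          simp only [List.getElem?_cons_zero, Option.some.injEq] at h0
          rw [if_pos h0.symm]
        calc ∫⁻ ξ in cylinder u, ENNReal.ofReal (PK (elt x) ξ) ∂μ
            = ∫⁻ _ in cylinder u, c ∂μ :=
              setLIntegral_congr_fun (measurableSet_cylinder u) hconst
          _ = c * μ (cylinder u) := setLIntegral_const _ c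
      rw [hRHS]
      rcases eq_or_ne w' [] with hnil | hne
      · -- `u = elt x`
        rw [gen_preimage_b (by rw [hw, hnil])]
        have hμx : μ (cylinder (elt (bar x))) = 1 / (2 * (r : ℝ≥0∞)) := by
          rw [hμ _ (elt_ne_one _), toWord_elt]
          simp
        have hμu : μ (cylinder u) = 1 / (2 * (r : ℝ≥0∞)) := by
          rw [hμ u hu, hw, hnil]
          simp
        rw [measure_compl (measurableSet_cylinder _) (measure_ne_top μ _), measure_univ,
          hμx, hμu, one_div]
        symm
        apply ENNReal.eq_sub_of_add_eq (ENNReal.inv_ne_top.mpr h2r0)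
        calc c * (2 * (r : ℝ≥0∞))⁻¹ + (2 * (r : ℝ≥0∞))⁻¹
            = (c + 1) * (2 * (r : ℝ≥0∞))⁻¹ := by ring
          _ = 2 * (r : ℝ≥0∞) * (2 * (r : ℝ≥0∞))⁻¹ := by rw [hc1]
          _ = 1 := ENNReal.mul_inv_cancel h2r0 h2rtop
      · -- `|u| ≥ 2`
        have hu' : (elt x)⁻¹ * u ≠ 1 := by
          intro hcon
          have h := toWord_inv_elt_mul hw
          rw [hcon, FreeGroup.toWord_one] at h
          exact hne h.symm
        have hl1 : 0 < w'.length := List.length_pos_iff.mpr hne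
        rw [gen_preimage_a hw hne, hμ _ hu', toWord_inv_elt_mul hw, hμ u hu, hw]
        have hlw : (x :: w').length - 1 = (w'.length - 1) + 1 := by
          simp only [List.length_cons]
          omega
        rw [hlw, harith (w'.length - 1)]
    · -- head letter differs from `x`
      have hRHS : ∫⁻ ξ in cylinder u, ENNReal.ofReal (PK (elt x) ξ) ∂μ =
          c⁻¹ * μ (cylinder u) := by
        have hconst : ∀ ξ ∈ cylinder u, ENNReal.ofReal (PK (elt x) ξ) = c⁻¹ := by
          intro ξ hξ
          have hpre : IsPrefixSeq u.toWord ξ.1 := hξ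
          rw [hfval]
          have h0 := hpre 0 hlpos
          rw [if_neg ?_]
          intro hcon
          apply hx0
          rw [h0, hcon]
        calc ∫⁻ ξ in cylinder u, ENNReal.ofReal (PK (elt x) ξ) ∂μ
            = ∫⁻ _ in cylinder u, c⁻¹ ∂μ :=
              setLIntegral_congr_fun (measurableSet_cylinder u) hconst
          _ = c⁻¹ * μ (cylinder u) := setLIntegral_const _ _
      have hne1 : elt (bar x) * u ≠ 1 := by
        intro hcon
        have h := toWord_elt_mul (bar x) u (by rwa [bar_bar])
        rw [hcon, FreeGroup.toWord_one] at h
        exact List.cons_ne_nil _ _ h.symm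
      rw [hRHS, gen_preimage_c hu hx0, hμ _ hne1, toWord_elt_mul (bar x) u (by rwa [bar_bar]),
        hμ u hu]
      have h1 : (bar x :: u.toWord).length - 1 = (u.toWord.length - 1) + 1 := by
        simp only [List.length_cons]
        omega
      rw [h1, ← harith' (u.toWord.length - 1)]
  -- agreement on the whole space via the partition into length-one cylinders
  have hcover : (Set.univ : Set (Boundary r)) = ⋃ y : Letter r, cylinder (elt y) := by
    ext ξ
    simp only [Set.mem_univ, true_iff, Set.mem_iUnion]
    exact ⟨ξ.1 0, mem_cylinder_elt.mpr rfl⟩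
  have hdisj : Pairwise (Function.onFun Disjoint fun y : Letter r => cylinder (elt y)) := by
    intro y y' hyy'
    refine Set.disjoint_left.mpr fun {ξ} hy hy' => hyy' ?_
    rw [← mem_cylinder_elt.mp hy]
    exact mem_cylinder_elt.mp hy'
  have huniv : μ.map (act (elt x)) Set.univ =
      μ.withDensity (fun ξ => ENNReal.ofReal (PK (elt x) ξ)) Set.univ := by
    rw [hcover, measure_iUnion hdisj fun y => measurableSet_cylinder _,
      measure_iUnion hdisj fun y => measurableSet_cylinder _]
    exact tsum_congr fun y => key (elt y) (elt_ne_one y)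
  haveI : IsProbabilityMeasure (μ.map (act (elt x))) :=
    Measure.isProbabilityMeasure_map (measurable_act hr0 (elt x)).aemeasurable
  haveI : IsFiniteMeasure (μ.withDensity fun ξ => ENNReal.ofReal (PK (elt x) ξ)) := by
    constructor
    rw [← huniv]
    exact measure_lt_top _ _
  exact MeasureTheory.ext_of_generate_finite (Cyl r) (generateFrom_Cyl hr0) isPiSystem_Cyl
    (fun A hA => by obtain ⟨u, hu, rfl⟩ := hA; exact key u hu) huniv

/-! #### the measure identity for a general group element -/

lemma main_map_eq (hr : 2 ≤ r) (μ : Measure (Boundary r)) [IsProbabilityMeasure μ]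
    (hμ : ∀ u : FreeGroup (Fin r), u ≠ 1 →
      μ (cylinder u) =
        1 / (2 * (r : ℝ≥0∞) * (2 * (r : ℝ≥0∞) - 1) ^ ((FreeGroup.toWord u).length - 1)))
    (γ : FreeGroup (Fin r)) :
    μ.map (act γ) = μ.withDensity (fun ξ => ENNReal.ofReal (PK γ ξ)) := by
  have hr0 : 0 < r := by omega
  obtain ⟨n, hlen⟩ : ∃ n, γ.toWord.length = n := ⟨_, rfl⟩
  induction n generalizing γ with
  | zero =>
    have hγ : γ = 1 := by
      rw [← FreeGroup.toWord_eq_nil_iff]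
      exact List.length_eq_zero_iff.mp hlen
    subst hγ
    have hact : act (1 : FreeGroup (Fin r)) = id := by
      funext ξ
      apply Subtype.ext
      rw [act_val, FreeGroup.toWord_one, concatSeq_nil]
      rfl
    have hPK : ∀ ξ : Boundary r, ENNReal.ofReal (PK (1 : FreeGroup (Fin r)) ξ) = 1 := by
      intro ξ
      rw [PK, FreeGroup.toWord_one]
      have hg : gromov ([] : List (Letter r)) ξ.1 = 0 := gromov_nil _
      rw [hg]
      norm_num
    rw [hact, Measure.map_id,
      show (fun ξ : Boundary r => ENNReal.ofReal (PK 1 ξ)) = fun _ => (1 : ℝ≥0∞) from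
        funext hPK]
    exact (withDensity_one (μ := μ)).symm
  | succ n ih =>
    obtain ⟨x, w', hw⟩ : ∃ x w', γ.toWord = x :: w' := by
      cases hc : γ.toWord with
      | nil => rw [hc] at hlen; simp at hlen
      | cons a b => exact ⟨a, b, rfl⟩
    have hw' : ((elt x)⁻¹ * γ).toWord = w' := toWord_inv_elt_mul hw
    have hlen' : ((elt x)⁻¹ * γ).toWord.length = n := by
      rw [hw']
      rw [hw] at hlen
      simpa using hlen
    have hact : act γ = act (elt x) ∘ act ((elt x)⁻¹ * γ) := by
      funext ξ
      exact act_cons hw ξ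
    rw [hact, ← Measure.map_map (measurable_act hr0 (elt x)) (measurable_act hr0 _),
      ih _ hlen',
      map_withDensity (measurable_act hr0 (elt x)) (measurable_act hr0 (elt (bar x)))
        (act_elt_inv x) (measurable_PK hr0 _) μ,
      gen_map_eq hr μ hμ x,
      ← withDensity_mul μ (measurable_PK hr0 (elt x))
        ((measurable_PK hr0 _).comp (measurable_act hr0 (elt (bar x))))]
    congr 1
    funext ξ
    show ENNReal.ofReal (PK (elt x) ξ) *
        ENNReal.ofReal (PK ((elt x)⁻¹ * γ) (act (elt (bar x)) ξ)) =
      ENNReal.ofReal (PK γ ξ)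
    rw [← ENNReal.ofReal_mul (PK_pos hr (elt x) ξ).le, ← PK_cocycle hr hw ξ]

end Aux

/-- quasi-invariance of $μ$ and the Radon–Nikodym derivative.
For every $γ ∈ F_r$, the pushforward $γ_*μ$ of $μ$ under $ξ ↦ γ·ξ$ is absolutely
continuous with respect to $μ$, with density
$d(γ_*μ)/dμ(ξ) = P(γ,ξ) = (2r-1)^{2(γ|ξ)-|γ|}$ for $μ$-a.e. $ξ$. -/
theorem quasi_invariance_radon_nikodym {r : ℕ} (hr : 2 ≤ r)
    [BorelSpace (Boundary r)]
    (μ : Measure (Boundary r)) [IsProbabilityMeasure μ]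
    (hμ : ∀ u : FreeGroup (Fin r), u ≠ 1 →
      μ (cylinder u) =
        1 / (2 * (r : ℝ≥0∞) * (2 * (r : ℝ≥0∞) - 1) ^ ((FreeGroup.toWord u).length - 1)))
    (γ : FreeGroup (Fin r)) :
    μ.map (act γ) ≪ μ ∧
    (μ.map (act γ)).rnDeriv μ =ᵐ[μ] fun ξ => ENNReal.ofReal (PK γ ξ) := by
  have hmain := main_map_eq hr μ hμ γ
  constructor
  · rw [hmain]
    exact withDensity_absolutelyContinuous μ _
  · rw [hmain]
    exact Measure.rnDeriv_withDensity μ (measurable_PK (by omega) γ)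

end ArxivFree
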